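/- Let C be a polyhedral cone in M and φ : C → ℝ≥0 a monoid homomorphism (from (C,+) to (ℝ≥0,·)) that is continuous on the relative interior of each face of C. Then supp(φ) = {m ∈ C : φ(m) > 0} is a face of C. -/

import Mathlib

open Finset
set_option linter.unusedSectionVars false

section ConeOf
variable {M : Type*} [NormedAddCommGroup M] [NormedSpace ℝ M] [DecidableEq M]

/-- The cone generated by a finite set of vectors. -/
def coneOf (T : Finset M) : Set M :=
  {x | ∃ c : M → ℝ, (∀ v, 0 ≤ c v) ∧ x = ∑ v ∈ T, c v • v}

theorem coneOf_zero_mem (T : Finset M) : (0 : M) ∈ coneOf T :=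
  ⟨0, fun _ => le_refl 0, by simp⟩

theorem coneOf_mem_of_mem {T : Finset M} {v : M} (hv : v ∈ T) : v ∈ coneOf T := by
  classical
  refine ⟨fun w => if w = v then 1 else 0, fun w => by positivity, ?_⟩
  rw [Finset.sum_eq_single v]
  · simp
  · intro b _ hb; simp [hb]
  · intro h; exact absurd hv h

theorem coneOf_add_mem {T : Finset M} {x y : M} (hx : x ∈ coneOf T) (hy : y ∈ coneOf T) :
    x + y ∈ coneOf T := by
  obtain ⟨c, hc, rfl⟩ := hx
  obtain ⟨d, hd, rfl⟩ := hy
  exact ⟨c + d, fun v => add_nonneg (hc v) (hd v), by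
    simp [add_smul, Finset.sum_add_distrib]⟩

theorem coneOf_smul_mem {T : Finset M} {x : M} {t : ℝ} (ht : 0 ≤ t) (hx : x ∈ coneOf T) :
    t • x ∈ coneOf T := by
  obtain ⟨c, hc, rfl⟩ := hx
  exact ⟨fun v => t * c v, fun v => mul_nonneg ht (hc v), by
    rw [Finset.smul_sum]; simp [mul_smul]⟩

theorem coneOf_convex (T : Finset M) : Convex ℝ (coneOf T) := by
  intro x hx y hy a b ha hb _
  exact coneOf_add_mem (coneOf_smul_mem ha hx) (coneOf_smul_mem hb hy)

theorem coneOf_mono {A B : Finset M} (h : A ⊆ B) : coneOf A ⊆ coneOf B := by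
  rintro x ⟨c, hc, rfl⟩
  refine ⟨fun v => if v ∈ A then c v else 0,
    fun v => by by_cases h : v ∈ A <;> simp [h, hc v], ?_⟩
  calc ∑ v ∈ A, c v • v = ∑ v ∈ A, (if v ∈ A then c v else 0) • v := by
        exact Finset.sum_congr rfl fun v hv => by rw [if_pos hv]
    _ = ∑ v ∈ B, (if v ∈ A then c v else 0) • v := by
        refine Finset.sum_subset h fun v _ hv => ?_
        rw [if_neg hv, zero_smul]

theorem coneOf_union_sub {A B : Finset M} {x : M} (hx : x ∈ coneOf (A ∪ B)) :
    ∃ a ∈ coneOf A, ∃ b ∈ coneOf B, x = a + b := by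
  classical
  obtain ⟨c, hc, rfl⟩ := hx
  refine ⟨∑ v ∈ A, c v • v, ⟨c, hc, rfl⟩, ∑ v ∈ B \ A, c v • v,
    coneOf_mono (Finset.sdiff_subset) ⟨c, hc, rfl⟩, ?_⟩
  rw [← Finset.sum_union (Finset.disjoint_sdiff)]
  congr 1
  rw [Finset.union_sdiff_self_eq_union]

theorem coneOf_neg_image {T : Finset M} {x : M} (hx : x ∈ coneOf (T.image (fun v => -v))) :
    -x ∈ coneOf T := by
  classical
  obtain ⟨c, hc, rfl⟩ := hx
  rw [Finset.sum_image (f := fun v => c v • v) (by intro a _ b _ h; simpa using h)]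
  refine ⟨fun v => c (-v), fun v => hc _, ?_⟩
  rw [← Finset.sum_neg_distrib]
  exact Finset.sum_congr rfl fun v _ => by simp [smul_neg]

variable [FiniteDimensional ℝ M]

theorem coneOf_isClosed_of_linearIndependent (T : Finset M)
    (h : LinearIndependent ℝ (fun v : T => (v : M))) : IsClosed (coneOf T) := by
  let L : (T → ℝ) →ₗ[ℝ] M :=
    { toFun := fun c => ∑ v : T, c v • (v : M)
      map_add' := fun c d => by simp [add_smul, Finset.sum_add_distrib]
      map_smul' := fun t c => by simp [mul_smul, Finset.smul_sum] }
  have hker : LinearMap.ker L = ⊥ := by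
    rw [LinearMap.ker_eq_bot']
    intro c hc
    funext v
    exact Fintype.linearIndependent_iff.mp h c hc v
  have hemb := LinearMap.isClosedEmbedding_of_injective hker
  have himg : coneOf T = L '' {c : T → ℝ | ∀ v, 0 ≤ c v} := by
    ext x
    constructor
    · rintro ⟨c, hc, rfl⟩
      refine ⟨fun v => c v, fun v => hc v, ?_⟩
      show ∑ v : T, c v • (v : M) = _
      rw [Finset.sum_coe_sort T (fun v => c v • v)]
    · rintro ⟨d, hd, rfl⟩
      refine ⟨fun v => if h : v ∈ T then d ⟨v, h⟩ else 0,
        fun v => by by_cases h : v ∈ T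
                    · simpa [h] using hd ⟨v, h⟩
                    · simp [h], ?_⟩
      show _ = ∑ v ∈ T, (if h : v ∈ T then d ⟨v, h⟩ else 0) • v
      rw [← Finset.sum_attach T (fun v => (if h : v ∈ T then d ⟨v, h⟩ else 0) • v)]
      exact (Finset.sum_congr rfl fun v _ => by rw [dif_pos v.2]).symm
  rw [himg]
  refine hemb.isClosedMap _ ?_
  have : {c : T → ℝ | ∀ v, 0 ≤ c v} = Set.pi Set.univ (fun _ => Set.Ici (0:ℝ)) := by
    ext c
    rw [Set.mem_univ_pi]
    exact ⟨fun h v => h v, fun h v => h v⟩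
  rw [this]
  exact isClosed_set_pi fun i _ => isClosed_Ici

theorem coneOf_isClosed (T : Finset M) : IsClosed (coneOf T) := by
  classical
  suffices H : ∀ n (T : Finset M), T.card ≤ n → IsClosed (coneOf T) from H T.card T le_rfl
  intro n
  induction n with
  | zero =>
    intro T hT
    rw [Nat.le_zero, Finset.card_eq_zero] at hT
    subst hT
    have : coneOf (∅ : Finset M) = {0} := by
      ext x
      simp only [coneOf, Finset.sum_empty, Set.mem_setOf_eq, Set.mem_singleton_iff]
      exact ⟨fun ⟨c, _, hx⟩ => hx, fun hx => ⟨0, fun _ => le_rfl, hx⟩⟩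
    rw [this]; exact isClosed_singleton
  | succ n ih =>
    intro T hT
    by_cases h : LinearIndependent ℝ (fun v : T => (v : M))
    · exact coneOf_isClosed_of_linearIndependent T h
    · -- get a nontrivial relation with a positive coefficient
      rw [Fintype.linearIndependent_iff] at h
      push_neg at h
      obtain ⟨g, hg0, w, hg0w⟩ := h
      have key : ∀ g : T → ℝ, (∑ v : T, g v • (v : M)) = 0 → ∀ w : T, 0 < g w →
          IsClosed (coneOf T) := by
        intro g hg0 w hw
        set d : M → ℝ := fun v => if h : v ∈ T then g ⟨v, h⟩ else 0 with hd
        have hdsum : ∑ v ∈ T, d v • v = 0 := by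
          rw [← Finset.sum_attach T (fun v => d v • v)]
          rw [← hg0]
          exact Finset.sum_congr rfl fun v _ => by simp [hd, v.2]
        have hdw : 0 < d (w : M) := by simpa [hd, w.2] using hw
        set P := T.filter (fun v => 0 < d v) with hP
        have hwP : (w : M) ∈ P := Finset.mem_filter.2 ⟨w.2, hdw⟩
        have hcover : coneOf T = ⋃ v ∈ P, coneOf (T.erase v) := by
          ext x
          constructor
          · rintro ⟨c, hc, rfl⟩
            obtain ⟨v', hv'P, hv'min⟩ := Finset.exists_min_image P (fun v => c v / d v) ⟨w, hwP⟩
            have hdv' : 0 < d v' := (Finset.mem_filter.1 hv'P).2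
            set lam := c v' / d v' with hlam
            have hlam0 : 0 ≤ lam := div_nonneg (hc v') hdv'.le
            refine Set.mem_biUnion hv'P ?_
            refine ⟨fun v => if v ∈ T.erase v' then c v - lam * d v else 0, ?_, ?_⟩
            · intro v
              by_cases hv : v ∈ T.erase v'
              · simp only [hv, if_pos]
                rcases le_or_gt (d v) 0 with hdv | hdv
                · have : lam * d v ≤ 0 := mul_nonpos_of_nonneg_of_nonpos hlam0 hdv
                  linarith [hc v]
                · have hvP : v ∈ P := Finset.mem_filter.2 ⟨Finset.mem_of_mem_erase hv, hdv⟩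
                  have h2 := hv'min v hvP
                  rw [div_le_div_iff₀ hdv' hdv] at h2
                  have h3 : lam * d v ≤ c v := by
                    rw [hlam, div_mul_eq_mul_div, div_le_iff₀ hdv']
                    nlinarith
                  linarith
              · simp [hv]
            · have e1 : ∑ v ∈ T.erase v', (if v ∈ T.erase v' then c v - lam * d v else 0) • v
                  = ∑ v ∈ T.erase v', (c v - lam * d v) • v :=
                Finset.sum_congr rfl fun v hv => by rw [if_pos hv]
              have e2 : ∑ v ∈ T.erase v', (c v - lam * d v) • v
                  = ∑ v ∈ T, (c v - lam * d v) • v := by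
                refine Finset.sum_erase T ?_
                have : c v' - lam * d v' = 0 := by
                  rw [hlam]; field_simp; ring
                rw [this, zero_smul]
              rw [e1, e2]
              have : ∑ v ∈ T, (c v - lam * d v) • v
                  = ∑ v ∈ T, c v • v - lam • ∑ v ∈ T, d v • v := by
                rw [Finset.smul_sum, ← Finset.sum_sub_distrib]
                exact Finset.sum_congr rfl fun v _ => by
                  rw [sub_smul, smul_smul]
              rw [this, hdsum, smul_zero, sub_zero]
          · intro hx
            simp only [Set.mem_iUnion] at hx
            obtain ⟨v, _, hxv⟩ := hx
            exact coneOf_mono (Finset.erase_subset _ _) hxv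
        rw [hcover]
        refine Set.Finite.isClosed_biUnion P.finite_toSet fun v hv => ?_
        refine ih (T.erase v) ?_
        have hvT : v ∈ T := (Finset.mem_filter.1 hv).1
        have := Finset.card_erase_of_mem hvT
        omega
      rcases lt_or_gt_of_ne hg0w with hneg | hpos
      · refine key (-g) ?_ w (by simpa using hneg)
        have e : ∑ v : {x // x ∈ T}, (-g) v • (v : M)
            = - ∑ v : {x // x ∈ T}, g v • (v : M) := by
          rw [← Finset.sum_neg_distrib]
          exact Finset.sum_congr rfl fun v _ => by simp [neg_smul]
        rw [e, hg0, neg_zero]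
      · exact key g hg0 w hpos

theorem coneOf_separation (T : Finset M) {x : M} (hx : x ∉ coneOf T) :
    ∃ w : Module.Dual ℝ M, Continuous w ∧ (∀ a ∈ coneOf T, 0 ≤ w a) ∧ w x < 0 := by
  obtain ⟨f, α, hfK, hfx⟩ :=
    geometric_hahn_banach_closed_point (coneOf_convex T) (coneOf_isClosed T) hx
  have hα : 0 < α := by simpa using hfK 0 (coneOf_zero_mem T)
  have hle : ∀ a ∈ coneOf T, f a ≤ 0 := by
    intro a ha
    by_contra hpos
    push_neg at hpos
    obtain ⟨n, hn⟩ := exists_nat_gt (α / f a)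
    have h1 : α < (n : ℝ) * f a := by
      rw [div_lt_iff₀ hpos] at hn; linarith
    have h2 : f ((n : ℝ) • a) < α := hfK _ (coneOf_smul_mem (by positivity) ha)
    rw [map_smul, smul_eq_mul] at h2
    linarith
  refine ⟨-(f : M →ₗ[ℝ] ℝ), (continuous_neg.comp f.continuous : ), fun a ha => ?_, ?_⟩
  · simpa using hle a ha
  · have : α < f x := hfx
    simp only [LinearMap.neg_apply, ContinuousLinearMap.coe_coe]
    linarith

end ConeOf

section Phi
variable {M : Type*} [NormedAddCommGroup M] [NormedSpace ℝ M] [DecidableEq M]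
variable {S : Finset M} {φ : M → ℝ}

theorem coneOf_sum_mem {T : Finset M} (s : Finset M) (f : M → M)
    (h : ∀ v ∈ s, f v ∈ coneOf T) : ∑ v ∈ s, f v ∈ coneOf T := by
  induction s using Finset.induction_on with
  | empty => simpa using coneOf_zero_mem T
  | insert _ _ ha ih =>
    rw [Finset.sum_insert ha]
    exact coneOf_add_mem (h _ (Finset.mem_insert_self _ _))
      (ih fun v hv => h v (Finset.mem_insert_of_mem hv))

theorem phi_pow (h0 : φ 0 = 1)
    (hmul : ∀ m ∈ coneOf S, ∀ m' ∈ coneOf S, φ (m + m') = φ m * φ m')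
    {x : M} (hx : x ∈ coneOf S) (n : ℕ) : φ ((n : ℝ) • x) = φ x ^ n := by
  induction n with
  | zero => simpa using h0
  | succ n ih =>
    have e : ((n + 1 : ℕ) : ℝ) • x = (n : ℝ) • x + x := by
      push_cast; rw [add_smul, one_smul]
    rw [e, hmul _ (coneOf_smul_mem (by positivity) hx) _ hx, ih, pow_succ]

theorem phi_prod (h0 : φ 0 = 1)
    (hmul : ∀ m ∈ coneOf S, ∀ m' ∈ coneOf S, φ (m + m') = φ m * φ m')
    (n : M → ℕ) (s : Finset M) (hs : ∀ v ∈ s, v ∈ coneOf S) :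
    φ (∑ v ∈ s, (n v : ℝ) • v) = ∏ v ∈ s, φ v ^ n v := by
  induction s using Finset.induction_on with
  | empty => simpa using h0
  | @insert a s ha ih =>
    have hmem : ∀ v ∈ s, v ∈ coneOf S := fun v hv => hs v (Finset.mem_insert_of_mem hv)
    rw [Finset.sum_insert ha, Finset.prod_insert ha,
      hmul _ (coneOf_smul_mem (by positivity) (hs a (Finset.mem_insert_self _ _)))
        _ (coneOf_sum_mem s _ fun v hv => coneOf_smul_mem (by positivity) (hmem v hv)),
      ih hmem, phi_pow h0 hmul (hs a (Finset.mem_insert_self _ _))]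

/-- If `φ(x) > 0` and `x = ∑ c_v v` with `c_v > 0`, then `φ(v) > 0`. -/
theorem coeff_pos (hnn : ∀ m ∈ coneOf S, 0 ≤ φ m) (h0 : φ 0 = 1)
    (hmul : ∀ m ∈ coneOf S, ∀ m' ∈ coneOf S, φ (m + m') = φ m * φ m')
    {c : M → ℝ} (hc : ∀ v, 0 ≤ c v) {v : M} (hv : v ∈ S) (hcv : 0 < c v)
    (hφ : 0 < φ (∑ w ∈ S, c w • w)) : 0 < φ v := by
  set x := ∑ w ∈ S, c w • w with hx
  have hxC : x ∈ coneOf S := ⟨c, hc, rfl⟩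
  have hvC : v ∈ coneOf S := coneOf_mem_of_mem hv
  obtain ⟨r, hr0, hrc⟩ := exists_rat_btwn hcv
  rw [show ((0:ℝ) : ℝ) = ((0:ℚ) : ℝ) by norm_num, Rat.cast_lt] at hr0
  set p : ℕ := r.num.toNat with hp
  set q : ℕ := r.den with hq
  have hp1 : 1 ≤ p := by
    have := Rat.num_pos.2 hr0
    omega
  have hq0 : (0:ℝ) < (q : ℝ) := by
    have := r.den_pos
    positivity
  have hrpq : (r : ℝ) = (p : ℝ) / (q : ℝ) := by
    rw [Rat.cast_def]
    congr 1
    · rw [hp]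
      norm_cast
      omega
  -- y = x - r • v lies in the cone
  set c' : M → ℝ := fun w => c w - (if w = v then (r : ℝ) else 0) with hc'
  have hc'nn : ∀ w, 0 ≤ c' w := by
    intro w
    rw [hc']
    dsimp only
    split
    · rename_i h; subst h; linarith
    · simpa using hc w
  set y := ∑ w ∈ S, c' w • w with hy
  have hyC : y ∈ coneOf S := ⟨c', hc'nn, rfl⟩
  have hxy : x = (r : ℝ) • v + y := by
    rw [hy, hx]
    have : ∑ w ∈ S, c' w • w = ∑ w ∈ S, c w • w - ∑ w ∈ S, (if w = v then (r:ℝ) else 0) • w := by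
      rw [← Finset.sum_sub_distrib]
      exact Finset.sum_congr rfl fun w _ => by rw [hc']; dsimp only; rw [sub_smul]
    rw [this]
    simp only [ite_smul, zero_smul]
    rw [Finset.sum_ite_eq' S v (fun w => (r:ℝ) • w), if_pos hv]
    abel
  have hkey : φ x ^ q = φ v ^ p * φ y ^ q := by
    have e : (q : ℝ) • x = (p : ℝ) • v + (q : ℝ) • y := by
      rw [hxy, smul_add, ← smul_assoc, smul_eq_mul, hrpq, mul_div_cancel₀ _ (ne_of_gt hq0)]
    calc φ x ^ q = φ ((q : ℝ) • x) := (phi_pow h0 hmul hxC q).symm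
      _ = φ ((p : ℝ) • v + (q : ℝ) • y) := by rw [e]
      _ = φ ((p : ℝ) • v) * φ ((q : ℝ) • y) :=
          hmul _ (coneOf_smul_mem (by positivity) hvC) _ (coneOf_smul_mem (by positivity) hyC)
      _ = φ v ^ p * φ y ^ q := by
          rw [phi_pow h0 hmul hvC, phi_pow h0 hmul hyC]
  rcases (hnn v hvC).lt_or_eq with h | h
  · exact h
  · exfalso
    have : φ x ^ q = 0 := by
      rw [hkey, ← h, zero_pow (by omega), zero_mul]
    exact absurd this (by positivity)

/-- If `x = ∑ c_v v` where `φ(v) > 0` whenever `c_v > 0`, then `φ(x) > 0`. -/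
theorem pos_of_support (hnn : ∀ m ∈ coneOf S, 0 ≤ φ m) (h0 : φ 0 = 1)
    (hmul : ∀ m ∈ coneOf S, ∀ m' ∈ coneOf S, φ (m + m') = φ m * φ m')
    {c : M → ℝ} (hc : ∀ v, 0 ≤ c v) (hpos : ∀ v ∈ S, 0 < c v → 0 < φ v) :
    0 < φ (∑ v ∈ S, c v • v) := by
  set x := ∑ v ∈ S, c v • v with hx
  have hxC : x ∈ coneOf S := ⟨c, hc, rfl⟩
  set n : M → ℕ := fun v => ⌈c v⌉₊ with hn
  set z := ∑ v ∈ S, ((n v : ℝ) - c v) • v with hz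
  have hzC : z ∈ coneOf S := by
    refine ⟨fun v => (n v : ℝ) - c v, fun v => ?_, rfl⟩
    have := Nat.le_ceil (c v)
    simpa [hn] using this
  have hxz : ∑ v ∈ S, (n v : ℝ) • v = x + z := by
    rw [hx, hz, ← Finset.sum_add_distrib]
    exact Finset.sum_congr rfl fun v _ => by rw [← add_smul]; ring_nf
  have hprod : φ (∑ v ∈ S, (n v : ℝ) • v) = ∏ v ∈ S, φ v ^ n v :=
    phi_prod h0 hmul n S fun v hv => coneOf_mem_of_mem hv
  have hppos : 0 < ∏ v ∈ S, φ v ^ n v := by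
    refine Finset.prod_pos fun v hv => ?_
    rcases Nat.eq_zero_or_pos (n v) with h | h
    · rw [h, pow_zero]; norm_num
    · have hcv : 0 < c v := by
        by_contra hcv
        push_neg at hcv
        have : c v = 0 := le_antisymm hcv (hc v)
        rw [hn] at h
        simp [this] at h
      exact pow_pos (hpos v hv hcv) _
  have := hmul x hxC z hzC
  rw [← hxz, hprod] at this
  nlinarith [hnn x hxC, hnn z hzC]

end Phi

def IsPolyhedralCone {N : Type*} [AddCommGroup N] [Module ℝ N] (σ : Set N) : Prop :=
  ∃ S : Finset N, σ = {x | ∃ c : N → ℝ, (∀ v, 0 ≤ c v) ∧ x = ∑ v ∈ S, c v • v}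

def dualCone {N : Type*} [AddCommGroup N] [Module ℝ N] (σ : Set N) :
    Set (Module.Dual ℝ N) := {u | ∀ v ∈ σ, 0 ≤ u v}

def IsFaceOf {N : Type*} [AddCommGroup N] [Module ℝ N] (τ σ : Set N) : Prop :=
  ∃ m ∈ dualCone σ, τ = {v | m v = 0} ∩ σ

/-- If `C` is a polyhedral cone and `φ : C → ℝ≥0` is a monoid homomorphism
(`φ(0) = 1`, `φ(m + m') = φ(m)·φ(m')`, `φ ≥ 0` on `C`) that is continuous on the
relative interior of each face of `C`, then `supp(φ) = {m ∈ C : φ(m) > 0}` is a face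
of `C`. -/
theorem support_is_face {M : Type*} [NormedAddCommGroup M] [NormedSpace ℝ M]
    [FiniteDimensional ℝ M] (C : Set M) (hC : IsPolyhedralCone C) (φ : M → ℝ)
    (hnn : ∀ m ∈ C, 0 ≤ φ m)
    (h0 : φ 0 = 1)
    (hmul : ∀ m ∈ C, ∀ m' ∈ C, φ (m + m') = φ m * φ m')
    (hcont : ∀ F, IsFaceOf F C → ContinuousOn φ (intrinsicInterior ℝ F)) :
    IsFaceOf {m ∈ C | 0 < φ m} C := by
  classical
  obtain ⟨S, hS⟩ := hC
  have hCS : C = coneOf S := hS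
  clear hS
  subst hCS
  set Splus := S.filter (fun v => 0 < φ v) with hSplus
  -- positivity on the subcone generated by the positive generators
  have hsubpos : ∀ m ∈ coneOf Splus, 0 < φ m := by
    rintro m ⟨c, hc, rfl⟩
    set c' : M → ℝ := fun v => if v ∈ Splus then c v else 0 with hc'
    have hc'nn : ∀ v, 0 ≤ c' v := fun v => by
      rw [hc']; dsimp only; split
      · exact hc v
      · exact le_rfl
    have e : ∑ v ∈ Splus, c v • v = ∑ v ∈ S, c' v • v := by
      calc ∑ v ∈ Splus, c v • v = ∑ v ∈ Splus, c' v • v :=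
            Finset.sum_congr rfl fun v hv => by rw [hc']; dsimp only; rw [if_pos hv]
        _ = ∑ v ∈ S, c' v • v := by
            refine Finset.sum_subset (Finset.filter_subset _ _) fun v _ hv => ?_
            rw [hc']; dsimp only; rw [if_neg hv, zero_smul]
    rw [e]
    refine pos_of_support hnn h0 hmul hc'nn fun v hv hcv => ?_
    by_contra hneg
    have : v ∉ Splus := fun hmem => hneg ((Finset.mem_filter.1 hmem).2)
    rw [hc'] at hcv; dsimp only at hcv; rw [if_neg this] at hcv
    exact lt_irrefl _ hcv
  -- construct, for each "bad" generator, a separating functional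
  have hWex : ∀ u : M, ∃ w : Module.Dual ℝ M, u ∈ S → ¬ 0 < φ u →
      ((∀ a ∈ coneOf S, 0 ≤ w a) ∧ (∀ v ∈ Splus, w v = 0) ∧ 0 < w u) := by
    intro u
    by_cases hu : u ∈ S ∧ ¬ 0 < φ u
    · obtain ⟨huS, huφ⟩ := hu
      have huφ0 : φ u = 0 :=
        le_antisymm (not_lt.1 huφ) (hnn u (coneOf_mem_of_mem huS))
      set S' := S ∪ Splus.image (fun v => -v) with hS'
      have hnu : -u ∉ coneOf S' := by
        intro hmem
        rw [hS'] at hmem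
        obtain ⟨a, ha, b, hb, hab⟩ := coneOf_union_sub hmem
        have hnb : -b ∈ coneOf Splus := coneOf_neg_image hb
        have hb2 : b = -u - a := by rw [hab]; abel
        have h2 : -b = a + u := by rw [hb2]; abel
        have hpos : 0 < φ (-b) := hsubpos _ hnb
        rw [h2, hmul a ha u (coneOf_mem_of_mem huS), huφ0, mul_zero] at hpos
        exact lt_irrefl _ hpos
      obtain ⟨w, _, hwK, hwx⟩ := coneOf_separation S' hnu
      refine ⟨w, fun _ _ => ⟨?_, ?_, ?_⟩⟩
      · intro a ha
        exact hwK a (coneOf_mono (by rw [hS']; exact Finset.subset_union_left) ha)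
      · intro v hv
        have h1 : 0 ≤ w v := hwK v (coneOf_mem_of_mem
          (by rw [hS']; exact Finset.mem_union_left _ (Finset.mem_of_mem_filter v hv)))
        have h2 : 0 ≤ w (-v) := hwK (-v) (coneOf_mem_of_mem
          (by rw [hS']; exact Finset.mem_union_right _ (Finset.mem_image_of_mem _ hv)))
        rw [map_neg] at h2
        linarith
      · rw [map_neg] at hwx
        linarith
    · exact ⟨0, fun h1 h2 => absurd ⟨h1, h2⟩ hu⟩
  choose W hW using hWex
  set bad := S.filter (fun u => ¬ 0 < φ u) with hbad
  set w : Module.Dual ℝ M := ∑ u ∈ bad, W u with hw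
  have hWprop : ∀ u ∈ bad, (∀ a ∈ coneOf S, 0 ≤ W u a) ∧ (∀ v ∈ Splus, W u v = 0) ∧ 0 < W u u :=
    fun u hu => hW u (Finset.mem_of_mem_filter u hu) (Finset.mem_filter.1 hu).2
  have hwapp : ∀ x : M, w x = ∑ u ∈ bad, W u x := by
    intro x
    rw [hw, LinearMap.coe_sum, Finset.sum_apply]
  refine ⟨w, fun v hv => ?_, ?_⟩
  · rw [hwapp]
    exact Finset.sum_nonneg fun u hu => (hWprop u hu).1 v hv
  · ext x
    simp only [Set.mem_setOf_eq, Set.mem_inter_iff]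
    constructor
    · rintro ⟨hxC, hφx⟩
      obtain ⟨c, hc, hrep⟩ := hxC
      refine ⟨?_, ⟨c, hc, hrep⟩⟩
      rw [hwapp]
      refine Finset.sum_eq_zero fun u hu => ?_
      rw [hrep, map_sum]
      refine Finset.sum_eq_zero fun v hv => ?_
      rw [map_smul, smul_eq_mul]
      rcases (hc v).lt_or_eq with hcv | hcv
      · have hφv : 0 < φ v := coeff_pos hnn h0 hmul hc hv hcv (hrep ▸ hφx)
        rw [(hWprop u hu).2.1 v (Finset.mem_filter.2 ⟨hv, hφv⟩), mul_zero]
      · rw [← hcv, zero_mul]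
    · rintro ⟨hxker, hxC⟩
      obtain ⟨c, hc, hrep⟩ := hxC
      refine ⟨⟨c, hc, hrep⟩, ?_⟩
      rw [hwapp] at hxker
      have hall : ∀ u ∈ bad, W u x = 0 := by
        rw [← Finset.sum_eq_zero_iff_of_nonneg fun u hu =>
          (hWprop u hu).1 x ⟨c, hc, hrep⟩]
        exact hxker
      have hcu : ∀ u ∈ bad, c u = 0 := by
        intro u hu
        have hx0 : W u x = 0 := hall u hu
        rw [hrep, map_sum] at hx0
        have hterm : ∀ v ∈ S, 0 ≤ W u (c v • v) := fun v hv => by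
          rw [map_smul, smul_eq_mul]
          exact mul_nonneg (hc v) ((hWprop u hu).1 v (coneOf_mem_of_mem hv))
        have := (Finset.sum_eq_zero_iff_of_nonneg hterm).1 hx0 u (Finset.mem_of_mem_filter u hu)
        rw [map_smul, smul_eq_mul] at this
        rcases mul_eq_zero.1 this with h | h
        · exact h
        · exact absurd h (ne_of_gt (hWprop u hu).2.2)
      rw [hrep]
      refine pos_of_support hnn h0 hmul hc fun v hv hcv => ?_
      by_contra hneg
      have : c v = 0 := hcu v (Finset.mem_filter.2 ⟨hv, hneg⟩)
      rw [this] at hcv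
      exact lt_irrefl _ hcv
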